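/- Let n ≥ 1, d ∈ ℝ, ρ > 0 with ρ ≥ n|d| + |d(d-2)|·max((ε⁻¹-1)⁻¹, (1-θ)⁻¹) for given ε, θ ∈ (0,1). Then the function Λ(x) = (ρ + |x|²)^{d/2} on ℝⁿ satisfies θ Λ(x) ≤ Λ(x) - ΔΛ(x) ≤ ε⁻¹ Λ(x) for all x ∈ ℝⁿ. -/

import Mathlib

/-- The Laplacian of a real-valued function on `EuclideanSpace ℝ (Fin n)`,
as the sum of second partial derivatives in the coordinate directions. -/
noncomputable def lap {n : ℕ} (f : EuclideanSpace ℝ (Fin n) → ℝ)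
    (x : EuclideanSpace ℝ (Fin n)) : ℝ :=
  ∑ i : Fin n, fderiv ℝ (fun y => fderiv ℝ f y (EuclideanSpace.single i 1)) x
    (EuclideanSpace.single i 1)

open Real

variable {n : ℕ}

noncomputable abbrev E (n : ℕ) := EuclideanSpace ℝ (Fin n)

lemma hg_deriv (ρ : ℝ) (x : E n) :
    HasFDerivAt (fun y : E n => ρ + ‖y‖ ^ (2:ℕ)) ((2:ℕ) • innerSL ℝ x) x := by
  have h := (hasFDerivAt_id x).norm_sq
  simpa using h.const_add ρ

lemma hF_deriv (ρ d : ℝ) (hρ : 0 < ρ) (x : E n) :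
    HasFDerivAt (fun y : E n => (ρ + ‖y‖ ^ (2:ℕ)) ^ (d/2))
      ((d/2 * (ρ + ‖x‖ ^ (2:ℕ)) ^ (d/2 - 1)) • ((2:ℕ) • innerSL ℝ x)) x := by
  refine (hg_deriv ρ x).rpow_const (Or.inl ?_)
  positivity

lemma inner_single (x : E n) (i : Fin n) :
    (inner ℝ x (EuclideanSpace.single i (1:ℝ)) : ℝ) = x i := by
  simp [EuclideanSpace.inner_single_right]

lemma fderiv_F_apply (ρ d : ℝ) (hρ : 0 < ρ) (y : E n) (i : Fin n) :
    fderiv ℝ (fun y : E n => (ρ + ‖y‖ ^ (2:ℕ)) ^ (d/2)) y (EuclideanSpace.single i 1)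
      = d * (ρ + ‖y‖ ^ (2:ℕ)) ^ (d/2 - 1) * y i := by
  rw [(hF_deriv ρ d hρ y).fderiv]
  simp [inner_single]
  ring

lemma second_deriv (ρ d : ℝ) (hρ : 0 < ρ) (x : E n) (i : Fin n) :
    fderiv ℝ (fun y : E n =>
        fderiv ℝ (fun z : E n => (ρ + ‖z‖ ^ (2:ℕ)) ^ (d/2)) y (EuclideanSpace.single i 1)) x
      (EuclideanSpace.single i 1)
      = d * (d - 2) * (ρ + ‖x‖ ^ (2:ℕ)) ^ (d/2 - 2) * (x i) ^ 2
        + d * (ρ + ‖x‖ ^ (2:ℕ)) ^ (d/2 - 1) := by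
  have hrw : (fun y : E n =>
      fderiv ℝ (fun z : E n => (ρ + ‖z‖ ^ (2:ℕ)) ^ (d/2)) y (EuclideanSpace.single i 1))
      = fun y : E n => d * ((ρ + ‖y‖ ^ (2:ℕ)) ^ (d/2 - 1) * y i) := by
    funext y
    rw [fderiv_F_apply ρ d hρ y i]; ring
  have h1 : HasFDerivAt (fun y : E n => (ρ + ‖y‖ ^ (2:ℕ)) ^ (d/2 - 1))
      (((d/2 - 1) * (ρ + ‖x‖ ^ (2:ℕ)) ^ (d/2 - 1 - 1)) • ((2:ℕ) • innerSL ℝ x)) x :=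
    (hg_deriv ρ x).rpow_const (Or.inl (by positivity))
  have h2 : HasFDerivAt (fun y : E n => y i) (EuclideanSpace.proj i (𝕜 := ℝ)) x :=
    (EuclideanSpace.proj i (𝕜 := ℝ)).hasFDerivAt
  have h3 := (h1.mul h2).const_mul d
  have h3' : HasFDerivAt (fun y : E n => d * ((ρ + ‖y‖ ^ (2:ℕ)) ^ (d/2 - 1) * y i)) _ x := h3
  rw [hrw, h3'.fderiv]
  have hsd : d/2 - 1 - 1 = d/2 - 2 := by ring
  simp [inner_single, hsd]
  ring
lemma sum_sq (x : E n) : ∑ i : Fin n, (x i) ^ 2 = ‖x‖ ^ (2:ℕ) := by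
  rw [EuclideanSpace.norm_eq, Real.sq_sqrt (by positivity)]
  simp [Real.norm_eq_abs, sq_abs]

lemma lap_eq (ρ d : ℝ) (hρ : 0 < ρ) (x : E n) :
    lap (fun y => (ρ + ‖y‖ ^ (2:ℕ)) ^ (d/2)) x
      = d * (d - 2) * (ρ + ‖x‖ ^ (2:ℕ)) ^ (d/2 - 2) * ‖x‖ ^ (2:ℕ)
        + n * d * (ρ + ‖x‖ ^ (2:ℕ)) ^ (d/2 - 1) := by
  unfold lap
  rw [Finset.sum_congr rfl (fun i _ => second_deriv ρ d hρ x i)]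
  rw [Finset.sum_add_distrib, ← Finset.sum_mul, ← Finset.mul_sum, sum_sq]
  simp [mul_comm]
set_option maxHeartbeats 1600000 in
theorem stmt5 (n : ℕ) (hn : 1 ≤ n) (d ρ ε θ : ℝ)
    (hε0 : 0 < ε) (hε1 : ε < 1) (hθ0 : 0 < θ) (hθ1 : θ < 1) (hρ0 : 0 < ρ)
    (hρ : (n * |d| + |d * (d - 2)|) * max ((ε⁻¹ - 1)⁻¹) ((1 - θ)⁻¹) ≤ ρ) :
    ∀ x : EuclideanSpace ℝ (Fin n),
      θ * (ρ + ‖x‖ ^ (2:ℕ)) ^ (d/2) ≤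
        (ρ + ‖x‖ ^ (2:ℕ)) ^ (d/2) - lap (fun y => (ρ + ‖y‖ ^ (2:ℕ)) ^ (d/2)) x ∧
      (ρ + ‖x‖ ^ (2:ℕ)) ^ (d/2) - lap (fun y => (ρ + ‖y‖ ^ (2:ℕ)) ^ (d/2)) x ≤
        ε⁻¹ * (ρ + ‖x‖ ^ (2:ℕ)) ^ (d/2) := by
  intro x
  have hr2 : (0:ℝ) ≤ ‖x‖ ^ (2:ℕ) := by positivity
  set r2 : ℝ := ‖x‖ ^ (2:ℕ) with hr2def
  set S : ℝ := ρ + r2 with hSdef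
  have hS0 : 0 < S := by positivity
  have hΛ0 : 0 < S ^ (d/2) := Real.rpow_pos_of_pos hS0 _
  have hρS : ρ ≤ S := by simp [hSdef]; linarith
  have hrS : r2 ≤ S := by simp [hSdef]; linarith
  have e1 : S ^ (d/2 - 1) = S ^ (d/2) / S := by
    rw [Real.rpow_sub hS0, Real.rpow_one]
  have e2 : S ^ (d/2 - 2) = S ^ (d/2) / S ^ 2 := by
    rw [Real.rpow_sub hS0, Real.rpow_two]
  set u : ℝ := S ^ (d/2) / S ^ 2 with hu
  have hu0 : 0 < u := by positivity
  have hΛ : S ^ (d/2) = u * S ^ 2 := by rw [hu]; field_simp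
  have h1 : S ^ (d/2) / S = u * S := by rw [hu]; field_simp
  set M := (n:ℝ) * |d| + |d * (d - 2)| with hM
  have hM0 : 0 ≤ M := by positivity
  have h1θ : (0:ℝ) < 1 - θ := by linarith
  have hεinv : 1 < ε⁻¹ := (one_lt_inv_iff₀).2 ⟨hε0, hε1⟩
  have hεinv0 : (0:ℝ) < ε⁻¹ - 1 := by linarith
  have hb1 : M ≤ ρ * (1 - θ) := by
    have h := le_trans (mul_le_mul_of_nonneg_left
      (le_max_right ((ε⁻¹ - 1)⁻¹) ((1 - θ)⁻¹)) hM0) hρ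
    rw [← div_eq_mul_inv] at h
    exact (div_le_iff₀ h1θ).1 h
  have hb2 : M ≤ ρ * (ε⁻¹ - 1) := by
    have h := le_trans (mul_le_mul_of_nonneg_left
      (le_max_left ((ε⁻¹ - 1)⁻¹) ((1 - θ)⁻¹)) hM0) hρ
    rw [← div_eq_mul_inv] at h
    exact (div_le_iff₀ hεinv0).1 h
  have hdd1 : d * (d - 2) ≤ |d * (d - 2)| := le_abs_self _
  have hdd2 : -(d * (d - 2)) ≤ |d * (d - 2)| := neg_le_abs _
  have hd1 : d ≤ |d| := le_abs_self _
  have hd2 : -d ≤ |d| := neg_le_abs _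
  have hn0 : (0:ℝ) ≤ n := Nat.cast_nonneg n
  have a1 : d * (d - 2) * r2 ≤ |d * (d - 2)| * S := mul_le_mul hdd1 hrS hr2 (abs_nonneg _)
  have a1' : -(|d * (d - 2)| * S) ≤ d * (d - 2) * r2 := by
    have b1 := mul_le_mul_of_nonneg_right (neg_abs_le (d*(d-2))) hr2
    have b2 := mul_le_mul_of_nonneg_left hrS (abs_nonneg (d*(d-2)))
    linarith
  have a2 : n * d * S ≤ n * |d| * S :=
    mul_le_mul_of_nonneg_right (mul_le_mul_of_nonneg_left hd1 hn0) hS0.le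
  have a2' : -(n * |d| * S) ≤ n * d * S := by nlinarith [mul_nonneg (mul_nonneg hn0 (by linarith : (0:ℝ) ≤ |d| + d)) hS0.le]
  have a3 : M * S ≤ ρ * (1 - θ) * S := mul_le_mul_of_nonneg_right hb1 hS0.le
  have a3' : M * S ≤ ρ * (ε⁻¹ - 1) * S := mul_le_mul_of_nonneg_right hb2 hS0.le
  have a4 : ρ * (1 - θ) * S ≤ (1 - θ) * S ^ 2 := by
    nlinarith [mul_le_mul_of_nonneg_right hρS (mul_nonneg h1θ.le hS0.le)]
  have a4' : ρ * (ε⁻¹ - 1) * S ≤ (ε⁻¹ - 1) * S ^ 2 := by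
    nlinarith [mul_le_mul_of_nonneg_right hρS (mul_nonneg hεinv0.le hS0.le)]
  have key1 : d * (d - 2) * r2 + n * d * S ≤ (1 - θ) * S ^ 2 := by
    have : M * S = |d * (d - 2)| * S + n * |d| * S := by rw [hM]; ring
    linarith
  have key2 : -((ε⁻¹ - 1) * S ^ 2) ≤ d * (d - 2) * r2 + n * d * S := by
    have : M * S = |d * (d - 2)| * S + n * |d| * S := by rw [hM]; ring
    nlinarith [a1', a2', a3', a4', this]
  have hlap : lap (fun y => (ρ + ‖y‖ ^ (2:ℕ)) ^ (d/2)) x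
      = u * (d * (d - 2) * r2 + n * d * S) := by
    rw [lap_eq ρ d hρ0 x, ← hr2def, ← hSdef, e1, e2, h1]
    ring
  rw [hlap, hΛ]
  constructor
  · nlinarith [mul_le_mul_of_nonneg_left key1 hu0.le]
  · nlinarith [mul_le_mul_of_nonneg_left key2 hu0.le]
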